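/- Under the same hypotheses as the per-iterate momentum-error bound — J twice continuously differentiable with L_h-Lipschitz Hessian; F twice continuously differentiable with ‖∇F − ∇J‖ ≤ δ_g and ‖∇²F − ∇²J‖ ≤ δ_h pointwise; η ∈ (0,1], α > 0; d_0 F_0-measurable with E[‖d_0 − ∇F(θ_0)‖²] ≤ σ²/M_init; g_t F_t-measurable with E[g_t | F_{t−1}] = ∇F(θ̃_t) and E[‖g_t − ∇F(θ̃_t)‖² | F_{t−1}] ≤ σ²/M a.s.; and (θ_t, d_t) generated by the normalized momentum iteration — it holds for every T ≥ 1 that Σ_{t=0}^{T−1} E[‖d_t − ∇F(θ_t)‖] ≤ σ/(√M_init · η) + √η σ T/√M + 2 α² L_h T/η² + 4 δ_g T/η + 2 α δ_h T/η. -/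

import Mathlib

open MeasureTheory


lemma aux_cs {Ω : Type*} [MeasurableSpace Ω] (μ : Measure Ω) [IsProbabilityMeasure μ]
    {E : Type*} [NormedAddCommGroup E] {f : Ω → E} (hf : MemLp f 2 μ) :
    ∫ ω, ‖f ω‖ ∂μ ≤ Real.sqrt (∫ ω, ‖f ω‖ ^ 2 ∂μ) := by
  have hpq : Real.HolderConjugate 2 2 := ⟨by norm_num, by norm_num, by norm_num⟩
  have h2 : (ENNReal.ofReal 2) = 2 := by norm_num
  have hfn : MemLp (fun ω => ‖f ω‖) (ENNReal.ofReal 2) μ := by rw [h2]; exact hf.norm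
  have hone : MemLp (fun _ : Ω => (1 : ℝ)) (ENNReal.ofReal 2) μ := memLp_const 1
  have key := integral_mul_le_Lp_mul_Lq_of_nonneg hpq
    (Filter.Eventually.of_forall fun ω => norm_nonneg (f ω))
    (Filter.Eventually.of_forall fun _ => zero_le_one) hfn hone
  have e1 : ∫ a, ‖f a‖ * 1 ∂μ = ∫ a, ‖f a‖ ∂μ := by simp
  have e2 : ∫ a : Ω, (1:ℝ) ^ (2:ℝ) ∂μ = 1 := by simp
  have e3 : ∫ a, ‖f a‖ ^ (2:ℝ) ∂μ = ∫ a, ‖f a‖ ^ 2 ∂μ := by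
    refine integral_congr_ae (Filter.Eventually.of_forall fun ω => ?_)
    show ‖f ω‖ ^ (2:ℝ) = ‖f ω‖ ^ (2:ℕ)
    rw [← Real.rpow_natCast ‖f ω‖ 2]; norm_num
  rw [e1, e2, e3] at key
  rw [Real.one_rpow, mul_one] at key
  calc ∫ ω, ‖f ω‖ ∂μ ≤ (∫ a, ‖f a‖ ^ 2 ∂μ) ^ ((1:ℝ)/2) := key
    _ = Real.sqrt (∫ ω, ‖f ω‖ ^ 2 ∂μ) := (Real.sqrt_eq_rpow _).symm

lemma aux_int_inner {Ω : Type*} [MeasurableSpace Ω] {μ : Measure Ω}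
    {E : Type*} [NormedAddCommGroup E] [InnerProductSpace ℝ E]
    {f g : Ω → E} (hf : MemLp f 2 μ) (hg : MemLp g 2 μ) :
    Integrable (fun ω => (inner ℝ (f ω) (g ω) : ℝ)) μ := by
  have hmaj : Integrable (fun ω => ‖f ω‖ * ‖g ω‖) μ := by
    rw [← memLp_one_iff_integrable]
    have := (hg.norm).smul (hf.norm) (p := 2) (q := 2) (r := 1) (hpqr := ⟨by rw [ENNReal.inv_two_add_inv_two, inv_one]⟩)
    exact this
  refine Integrable.mono' hmaj (hf.1.inner hg.1)
    (Filter.Eventually.of_forall fun ω => ?_)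
  exact norm_inner_le_norm (f ω) (g ω)

lemma aux_cross {Ω : Type*} {m m0 : MeasurableSpace Ω} (hm : m ≤ m0) (μ : Measure Ω)
    [IsProbabilityMeasure μ] {n : ℕ} {X ξ : Ω → EuclideanSpace ℝ (Fin n)}
    (hX : StronglyMeasurable[m] X) (hXL2 : MemLp X 2 μ) (hξL2 : MemLp ξ 2 μ)
    (hcond : μ[ξ|m] =ᵐ[μ] 0) :
    ∫ ω, (inner ℝ (X ω) (ξ ω) : ℝ) ∂μ = 0 := by
  have hξint : Integrable ξ μ := hξL2.integrable one_le_two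
  have key : ∀ i : Fin n, ∫ ω, X ω i * ξ ω i ∂μ = 0 := by
    intro i
    set P : EuclideanSpace ℝ (Fin n) →L[ℝ] ℝ := EuclideanSpace.proj i with hP
    have hξi_int : Integrable (fun ω => ξ ω i) μ := P.integrable_comp hξint
    have hXi2 : MemLp (fun ω => X ω i) 2 μ := P.comp_memLp' hXL2
    have hξi2 : MemLp (fun ω => ξ ω i) 2 μ := P.comp_memLp' hξL2
    have hXi_meas : StronglyMeasurable[m] (fun ω => X ω i) :=
      P.continuous.comp_stronglyMeasurable hX
    have hprod_int : Integrable ((fun ω => X ω i) * fun ω => ξ ω i) μ := by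
      rw [← memLp_one_iff_integrable]
      have := hξi2.smul hXi2 (p := 2) (q := 2) (r := 1)
        (hpqr := ⟨by rw [ENNReal.inv_two_add_inv_two, inv_one]⟩)
      simpa [Pi.smul_apply, smul_eq_mul] using this
    have hcondi : μ[(fun ω => ξ ω i)|m] =ᵐ[μ] (fun _ => (0:ℝ)) := by
      refine (ae_eq_condExp_of_forall_setIntegral_eq hm hξi_int
        (fun s _ _ => (integrable_const (0:ℝ)).integrableOn)
        (fun s hs _ => ?_)
        (StronglyMeasurable.aestronglyMeasurable stronglyMeasurable_const)).symm
      have h1 : ∫ x in s, ξ x i ∂μ = P (∫ x in s, ξ x ∂μ) :=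
        P.integral_comp_comm hξint.integrableOn
      have h2 : ∫ x in s, ξ x ∂μ = 0 := by
        rw [← setIntegral_condExp hm hξint hs]
        calc ∫ x in s, (μ[ξ|m]) x ∂μ = ∫ _ in s, (0 : EuclideanSpace ℝ (Fin n)) ∂μ :=
              integral_congr_ae (ae_restrict_of_ae hcond)
          _ = 0 := integral_zero _ _
      simp [h1, h2]
    calc ∫ ω, X ω i * ξ ω i ∂μ
        = ∫ ω, (μ[(fun ω => X ω i) * (fun ω => ξ ω i)|m]) ω ∂μ :=
          (integral_condExp hm (f := (fun ω => X ω i) * fun ω => ξ ω i)).symm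
      _ = ∫ ω, X ω i * (μ[(fun ω => ξ ω i)|m]) ω ∂μ := by
          refine integral_congr_ae ?_
          filter_upwards [condExp_mul_of_stronglyMeasurable_left hXi_meas hprod_int hξi_int] with ω hω
          simpa using hω
      _ = 0 := by
          rw [← integral_zero Ω ℝ (μ := μ)]
          refine integral_congr_ae ?_
          filter_upwards [hcondi] with ω hω
          simp [hω]
  have hinner : ∀ ω, (inner ℝ (X ω) (ξ ω) : ℝ) = ∑ i, X ω i * ξ ω i := by
    intro ω
    simp [PiLp.inner_apply, RCLike.inner_apply, map_sum, conj_trivial, mul_comm]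
  calc ∫ ω, (inner ℝ (X ω) (ξ ω) : ℝ) ∂μ = ∫ ω, ∑ i, X ω i * ξ ω i ∂μ := by
        simp_rw [hinner]
    _ = ∑ i, ∫ ω, X ω i * ξ ω i ∂μ := by
        refine integral_finset_sum _ (fun i _ => ?_)
        set P : EuclideanSpace ℝ (Fin n) →L[ℝ] ℝ := EuclideanSpace.proj i
        have hXi2 : MemLp (fun ω => X ω i) 2 μ := P.comp_memLp' hXL2
        have hξi2 : MemLp (fun ω => ξ ω i) 2 μ := P.comp_memLp' hξL2
        have := hξi2.smul hXi2 (p := 2) (q := 2) (r := 1)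
          (hpqr := ⟨by rw [ENNReal.inv_two_add_inv_two, inv_one]⟩)
        rw [← memLp_one_iff_integrable]
        exact this
    _ = 0 := by simp [key]

lemma aux_taylor {E : Type*} [NormedAddCommGroup E] [InnerProductSpace ℝ E]
    {G : E → E} (hG : Differentiable ℝ G) {L : ℝ} (hL : 0 ≤ L)
    (hLip : ∀ x y, ‖fderiv ℝ G x - fderiv ℝ G y‖ ≤ L * ‖x - y‖) (x y : E) :
    ‖G y - G x - (fderiv ℝ G x) (y - x)‖ ≤ L * ‖y - x‖ ^ 2 := by
  have h := (convex_closedBall x ‖y - x‖).norm_image_sub_le_of_norm_fderiv_le'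
    (f := G) (φ := fderiv ℝ G x) (C := L * ‖y - x‖)
    (fun z _ => hG z)
    (fun z hz => by
      refine (hLip z x).trans ?_
      have : ‖z - x‖ ≤ ‖y - x‖ := by
        simpa [Metric.mem_closedBall, dist_eq_norm] using hz
      exact mul_le_mul_of_nonneg_left this hL)
    (Metric.mem_closedBall_self (norm_nonneg _))
    (by simp [Metric.mem_closedBall, dist_eq_norm] : y ∈ Metric.closedBall x ‖y - x‖)
  calc ‖G y - G x - (fderiv ℝ G x) (y - x)‖ ≤ L * ‖y - x‖ * ‖y - x‖ := h
    _ = L * ‖y - x‖ ^ 2 := by ring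

lemma aux_grad_contDiff {E : Type*} [NormedAddCommGroup E] [InnerProductSpace ℝ E]
    [CompleteSpace E] {f : E → ℝ} (hf : ContDiff ℝ 2 f) : ContDiff ℝ 1 (gradient f) := by
  have h1 : ContDiff ℝ 1 (fderiv ℝ f) := hf.fderiv_right (by norm_num)
  have : gradient f = fun x => (InnerProductSpace.toDual ℝ E).symm (fderiv ℝ f x) := rfl
  rw [this]
  exact (InnerProductSpace.toDual ℝ E).symm.contDiff.comp h1

set_option maxHeartbeats 1000000

/-- Summed bound on the momentum error of the normalized momentum iteration
(Lemma 3, summed form): for every `T ≥ 1`,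
`Σ_{t=0}^{T−1} E[‖d_t − ∇F(θ_t)‖] ≤ σ/(√M_init η) + √η σ T/√M + 2 α² L_h T/η²
  + 4 δ_g T/η + 2 α δ_h T/η`. -/
theorem momentum_error_summed_bound
    {dim : ℕ} (hdim : 0 < dim)
    {Ω : Type*} [m0 : MeasurableSpace Ω]
    (μ : Measure Ω) [IsProbabilityMeasure μ]
    (ℱ : Filtration ℕ m0)
    (J F : EuclideanSpace ℝ (Fin dim) → ℝ)
    (Lh δg δh η α σ : ℝ) (Minit M : ℕ)
    (hLh : 0 < Lh) (hδg : 0 ≤ δg) (hδh : 0 ≤ δh)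
    (hη : 0 < η) (hη1 : η ≤ 1) (hα : 0 < α) (hσ : 0 ≤ σ)
    (hMinit : 1 ≤ Minit) (hM : 1 ≤ M)
    (hJ : ContDiff ℝ 2 J)
    (hJhess : ∀ x y, ‖fderiv ℝ (gradient J) x - fderiv ℝ (gradient J) y‖ ≤ Lh * ‖x - y‖)
    (hF : ContDiff ℝ 2 F)
    (hFg : ∀ θ, ‖gradient F θ - gradient J θ‖ ≤ δg)
    (hFh : ∀ θ, ‖fderiv ℝ (gradient F) θ - fderiv ℝ (gradient J) θ‖ ≤ δh)
    (θ0 : EuclideanSpace ℝ (Fin dim))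
    (θ θtilde d g : ℕ → Ω → EuclideanSpace ℝ (Fin dim))
    -- the normalized momentum iteration
    (hθzero : ∀ ω, θ 0 ω = θ0)
    (hθone : ∀ ω, θ 1 ω = θ0 + α • (‖d 0 ω‖⁻¹ • d 0 ω))
    (htilde : ∀ t, 1 ≤ t → ∀ ω,
      θtilde t ω = θ t ω + ((1 - η) / η) • (θ t ω - θ (t - 1) ω))
    (hdrec : ∀ t, 1 ≤ t → ∀ ω, d t ω = (1 - η) • d (t - 1) ω + η • g t ω)
    (hθrec : ∀ t, 1 ≤ t → ∀ ω, θ (t + 1) ω = θ t ω + α • (‖d t ω‖⁻¹ • d t ω))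
    -- stochastic assumptions
    (hd0meas : StronglyMeasurable[ℱ 0] (d 0))
    (hd0L2 : MemLp (d 0) 2 μ)
    (hd0var : ∫ ω, ‖d 0 ω - gradient F θ0‖ ^ 2 ∂μ ≤ σ ^ 2 / Minit)
    (hgmeas : ∀ t, 1 ≤ t → StronglyMeasurable[ℱ t] (g t))
    (hgL2 : ∀ t, 1 ≤ t → MemLp (g t) 2 μ)
    (hgmean : ∀ t, 1 ≤ t → μ[g t | ℱ (t - 1)] =ᵐ[μ] fun ω => gradient F (θtilde t ω))
    (hgvar : ∀ t, 1 ≤ t →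
      μ[fun ω => ‖g t ω - gradient F (θtilde t ω)‖ ^ 2 | ℱ (t - 1)]
        ≤ᵐ[μ] fun _ => σ ^ 2 / M) :
    ∀ T : ℕ, 1 ≤ T →
      ∑ t ∈ Finset.range T, ∫ ω, ‖d t ω - gradient F (θ t ω)‖ ∂μ ≤
        σ / (Real.sqrt Minit * η) + Real.sqrt η * σ * T / Real.sqrt M
          + 2 * α ^ 2 * Lh * T / η ^ 2 + 4 * δg * T / η + 2 * α * δh * T / η := by
  -- basic facts
  have hη0 : (0:ℝ) ≤ 1 - η := by linarith
  have hη2 : (0:ℝ) < η := hη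
  have hMpos : (0:ℝ) < M := by exact_mod_cast Nat.lt_of_lt_of_le Nat.zero_lt_one hM
  have hMinitpos : (0:ℝ) < Minit := by exact_mod_cast Nat.lt_of_lt_of_le Nat.zero_lt_one hMinit
  set c : ℝ := Lh * α ^ 2 / η + 2 * δg with hc_def
  have hc : 0 ≤ c := by positivity
  -- regularity of gradients
  have hgradJ1 : ContDiff ℝ 1 (gradient J) := aux_grad_contDiff hJ
  have hgradF1 : ContDiff ℝ 1 (gradient F) := aux_grad_contDiff hF
  have hgradJd : Differentiable ℝ (gradient J) := hgradJ1.differentiable one_ne_zero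
  have hgradFc : Continuous (gradient F) := hgradF1.continuous
  have htaylor : ∀ x y, ‖gradient J y - gradient J x -
      (fderiv ℝ (gradient J) x) (y - x)‖ ≤ Lh * ‖y - x‖ ^ 2 :=
    fun x y => aux_taylor hgradJd hLh.le hJhess x y
  -- step size bounds
  have hunit : ∀ v : EuclideanSpace ℝ (Fin dim), ‖α • (‖v‖⁻¹ • v)‖ ≤ α := by
    intro v
    rw [norm_smul, norm_smul, norm_inv, norm_norm, Real.norm_eq_abs, abs_of_pos hα]
    rcases eq_or_ne v 0 with h | h
    · simp [h, hα.le]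
    · rw [inv_mul_cancel₀ (norm_ne_zero_iff.mpr h), mul_one]
  have hstep : ∀ s : ℕ, ∀ ω, ‖θ (s+1) ω - θ s ω‖ ≤ α := by
    intro s ω
    cases s with
    | zero => rw [hθone ω, hθzero ω]; simpa using hunit (d 0 ω)
    | succ k =>
      rw [hθrec (k+1) (by omega) ω]
      simpa using hunit (d (k+1) ω)
  have hθb : ∀ t : ℕ, ∀ ω, ‖θ t ω - θ0‖ ≤ α * t := by
    intro t
    induction t with
    | zero => intro ω; simp [hθzero ω]
    | succ s ih =>
      intro ω
      have h1 : θ (s+1) ω - θ0 = (θ (s+1) ω - θ s ω) + (θ s ω - θ0) := by abel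
      rw [h1]
      calc ‖(θ (s+1) ω - θ s ω) + (θ s ω - θ0)‖ ≤ ‖θ (s+1) ω - θ s ω‖ + ‖θ s ω - θ0‖ :=
            norm_add_le _ _
        _ ≤ α + α * s := add_le_add (hstep s ω) (ih ω)
        _ = α * (s+1 : ℕ) := by push_cast; ring
  have htb : ∀ s : ℕ, ∀ ω, ‖θtilde (s+1) ω - θ0‖ ≤ α * (s+1) + α / η := by
    intro s ω
    have h := htilde (s+1) (by omega) ω
    simp only [Nat.add_sub_cancel] at h
    have h1 : θtilde (s+1) ω - θ0 =
        (θ (s+1) ω - θ0) + ((1 - η)/η) • (θ (s+1) ω - θ s ω) := by rw [h]; abel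
    rw [h1]
    have h2 : ‖((1 - η)/η) • (θ (s+1) ω - θ s ω)‖ ≤ α / η := by
      rw [norm_smul, Real.norm_eq_abs, abs_of_nonneg (by positivity)]
      calc (1 - η)/η * ‖θ (s+1) ω - θ s ω‖ ≤ (1/η) * α := by
            apply mul_le_mul _ (hstep s ω) (norm_nonneg _) (by positivity)
            apply div_le_div_of_nonneg_right ?_ ?_ |>.trans le_rfl
            all_goals first | linarith | positivity
        _ = α / η := by ring
    calc ‖(θ (s+1) ω - θ0) + ((1 - η)/η) • (θ (s+1) ω - θ s ω)‖
        ≤ ‖θ (s+1) ω - θ0‖ + ‖((1 - η)/η) • (θ (s+1) ω - θ s ω)‖ := norm_add_le _ _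
      _ ≤ α * (s+1) + α / η := by
          apply add_le_add _ h2
          have := hθb (s+1) ω
          push_cast at this ⊢
          linarith
  -- measurability
  have hsmul_meas : ∀ (k : ℕ) (v : Ω → EuclideanSpace ℝ (Fin dim)),
      StronglyMeasurable[ℱ k] v →
      StronglyMeasurable[ℱ k] (fun ω => α • (‖v ω‖⁻¹ • v ω)) := by
    intro k v hv
    letI : MeasurableSpace Ω := ℱ k
    have h1 : Measurable v := hv.measurable
    have h2 : Measurable (fun ω => ‖v ω‖⁻¹) := h1.norm.inv
    exact ((h2.smul h1).const_smul α).stronglyMeasurable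
  have hθSM0 : StronglyMeasurable[ℱ 0] (θ 0) := by
    have : θ 0 = fun _ => θ0 := funext hθzero
    rw [this]; exact stronglyMeasurable_const
  have hdSM : ∀ t, StronglyMeasurable[ℱ t] (d t) := by
    intro t
    induction t with
    | zero => exact hd0meas
    | succ s ih =>
      have h : d (s+1) = fun ω => (1 - η) • d s ω + η • g (s+1) ω := by
        funext ω
        have := hdrec (s+1) (by omega) ω
        simpa [Nat.add_sub_cancel] using this
      rw [h]
      exact ((ih.mono (ℱ.mono (Nat.le_succ s))).const_smul (1-η)).add
        (((hgmeas (s+1) (by omega))).const_smul η)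
  have hθSM : ∀ t, StronglyMeasurable[ℱ t] (θ (t+1)) := by
    intro t
    induction t with
    | zero =>
      have : θ 1 = fun ω => θ0 + α • (‖d 0 ω‖⁻¹ • d 0 ω) := funext hθone
      rw [this]
      exact stronglyMeasurable_const.add (hsmul_meas 0 (d 0) hd0meas)
    | succ s ih =>
      have h : θ (s+2) = fun ω => θ (s+1) ω + α • (‖d (s+1) ω‖⁻¹ • d (s+1) ω) :=
        funext (hθrec (s+1) (by omega))
      rw [h]
      exact (ih.mono (ℱ.mono (Nat.le_succ s))).add (hsmul_meas (s+1) (d (s+1)) (hdSM (s+1)))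
  have hθSM2 : ∀ t, StronglyMeasurable[ℱ t] (θ t) := by
    intro t
    cases t with
    | zero => exact hθSM0
    | succ s => exact (hθSM s).mono (ℱ.mono (Nat.le_succ s))
  have htildeSM : ∀ s : ℕ, StronglyMeasurable[ℱ s] (θtilde (s+1)) := by
    intro s
    have h : θtilde (s+1) = fun ω => θ (s+1) ω + ((1-η)/η) • (θ (s+1) ω - θ s ω) := by
      funext ω
      have := htilde (s+1) (by omega) ω
      simpa [Nat.add_sub_cancel] using this
    rw [h]
    exact (hθSM s).add (((hθSM s).sub (hθSM2 s)).const_smul ((1-η)/η))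
  have hgFtildeSM : ∀ s : ℕ,
      StronglyMeasurable[ℱ s] (fun ω => gradient F (θtilde (s+1) ω)) :=
    fun s => hgradFc.comp_stronglyMeasurable (htildeSM s)
  have hgFθSM : ∀ t, StronglyMeasurable[ℱ t] (fun ω => gradient F (θ t ω)) :=
    fun t => hgradFc.comp_stronglyMeasurable (hθSM2 t)
  -- L² facts
  have hboundθ : ∀ t : ℕ, MemLp (fun ω => gradient F (θ t ω)) 2 μ := by
    intro t
    obtain ⟨C, hC⟩ := (isCompact_closedBall θ0 (α * t)).exists_bound_of_continuousOn
      hgradFc.continuousOn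
    refine MemLp.of_bound (((hgFθSM t).mono (ℱ.le t)).aestronglyMeasurable) C
      (Filter.Eventually.of_forall fun ω => ?_)
    exact hC _ (by simpa [Metric.mem_closedBall, dist_eq_norm] using hθb t ω)
  have hboundtilde : ∀ s : ℕ, MemLp (fun ω => gradient F (θtilde (s+1) ω)) 2 μ := by
    intro s
    obtain ⟨C, hC⟩ := (isCompact_closedBall θ0 (α * (s+1) + α/η)).exists_bound_of_continuousOn
      hgradFc.continuousOn
    refine MemLp.of_bound (((hgFtildeSM s).mono (ℱ.le s)).aestronglyMeasurable) C
      (Filter.Eventually.of_forall fun ω => ?_)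
    refine hC _ (by simpa [Metric.mem_closedBall, dist_eq_norm] using htb s ω)
  have hdL2 : ∀ t, MemLp (d t) 2 μ := by
    intro t
    induction t with
    | zero => exact hd0L2
    | succ s ih =>
      have h : d (s+1) = fun ω => (1 - η) • d s ω + η • g (s+1) ω := by
        funext ω
        have := hdrec (s+1) (by omega) ω
        simpa [Nat.add_sub_cancel] using this
      rw [h]
      exact (ih.const_smul (1-η)).add ((hgL2 (s+1) (by omega)).const_smul η)
  have hξL2 : ∀ s : ℕ, MemLp (fun ω => g (s+1) ω - gradient F (θtilde (s+1) ω)) 2 μ :=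
    fun s => (hgL2 (s+1) (by omega)).sub (hboundtilde s)
  -- the martingale part
  obtain ⟨ms, hms0, hmsS⟩ : ∃ ms : ℕ → Ω → EuclideanSpace ℝ (Fin dim),
      (ms 0 = fun _ => 0) ∧ ∀ s : ℕ, ms (s+1) =
        fun ω => (1-η) • ms s ω + (g (s+1) ω - gradient F (θtilde (s+1) ω)) :=
    ⟨fun t => Nat.rec (fun _ => 0)
      (fun s ih ω => (1-η) • ih ω + (g (s+1) ω - gradient F (θtilde (s+1) ω))) t,
      rfl, fun s => rfl⟩
  have hmSM : ∀ t, StronglyMeasurable[ℱ t] (ms t) := by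
    intro t
    induction t with
    | zero => rw [hms0]; exact stronglyMeasurable_const
    | succ s ih =>
      rw [hmsS s]
      exact ((ih.mono (ℱ.mono (Nat.le_succ s))).const_smul (1-η)).add
        ((hgmeas (s+1) (by omega)).sub ((hgFtildeSM s).mono (ℱ.mono (Nat.le_succ s))))
  have hmL2 : ∀ t, MemLp (ms t) 2 μ := by
    intro t
    induction t with
    | zero => rw [hms0]; exact memLp_const 0
    | succ s ih =>
      rw [hmsS s]
      exact (ih.const_smul (1-η)).add (hξL2 s)
  -- conditional expectation facts
  have hξcond : ∀ s : ℕ,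
      μ[fun ω => g (s+1) ω - gradient F (θtilde (s+1) ω)|ℱ s] =ᵐ[μ] 0 := by
    intro s
    have hgint : Integrable (g (s+1)) μ := (hgL2 (s+1) (by omega)).integrable one_le_two
    have hhint : Integrable (fun ω => gradient F (θtilde (s+1) ω)) μ :=
      (hboundtilde s).integrable one_le_two
    have h1 := hgmean (s+1) (by omega)
    simp only [Nat.add_sub_cancel] at h1
    have h2 : μ[fun ω => gradient F (θtilde (s+1) ω)|ℱ s]
        = fun ω => gradient F (θtilde (s+1) ω) :=
      condExp_of_stronglyMeasurable (ℱ.le s) (hgFtildeSM s) hhint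
    calc μ[fun ω => g (s+1) ω - gradient F (θtilde (s+1) ω)|ℱ s]
        =ᵐ[μ] μ[g (s+1)|ℱ s] - μ[fun ω => gradient F (θtilde (s+1) ω)|ℱ s] :=
          condExp_sub hgint hhint _
      _ =ᵐ[μ] 0 := by
          rw [h2]
          filter_upwards [h1] with ω hω
          simp [Pi.sub_apply, hω]
  have hξvar : ∀ s : ℕ,
      ∫ ω, ‖g (s+1) ω - gradient F (θtilde (s+1) ω)‖ ^ 2 ∂μ ≤ σ ^ 2 / M := by
    intro s
    have hint : Integrable (fun ω => ‖g (s+1) ω - gradient F (θtilde (s+1) ω)‖ ^ 2) μ :=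
      (memLp_two_iff_integrable_sq_norm (hξL2 s).1).mp (hξL2 s)
    have h1 := hgvar (s+1) (by omega)
    simp only [Nat.add_sub_cancel] at h1
    calc ∫ ω, ‖g (s+1) ω - gradient F (θtilde (s+1) ω)‖ ^ 2 ∂μ
        = ∫ ω, (μ[fun ω => ‖g (s+1) ω - gradient F (θtilde (s+1) ω)‖ ^ 2|ℱ s]) ω ∂μ :=
          (integral_condExp (ℱ.le s)).symm
      _ ≤ ∫ _, σ ^ 2 / M ∂μ := integral_mono_ae integrable_condExp (integrable_const _) h1
      _ = σ ^ 2 / M := by simp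
  have hcross : ∀ s : ℕ,
      ∫ ω, (inner ℝ (ms s ω) (g (s+1) ω - gradient F (θtilde (s+1) ω)) : ℝ) ∂μ = 0 :=
    fun s => aux_cross (ℱ.le s) μ (hmSM s) (hmL2 s) (hξL2 s) (hξcond s)
  have hmvar : ∀ t, ∫ ω, ‖ms t ω‖ ^ 2 ∂μ ≤ σ ^ 2 / (M * η) := by
    intro t
    induction t with
    | zero =>
      rw [hms0]
      simp only [norm_zero]
      rw [show ((0:ℝ)^2) = 0 by ring]
      simp only [integral_zero]
      positivity
    | succ s ih =>
      have hmint : Integrable (fun ω => ‖ms s ω‖ ^ 2) μ :=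
        (memLp_two_iff_integrable_sq_norm (hmL2 s).1).mp (hmL2 s)
      have hξint : Integrable (fun ω => ‖g (s+1) ω - gradient F (θtilde (s+1) ω)‖ ^ 2) μ :=
        (memLp_two_iff_integrable_sq_norm (hξL2 s).1).mp (hξL2 s)
      have hinnerint : Integrable
          (fun ω => (inner ℝ (ms s ω) (g (s+1) ω - gradient F (θtilde (s+1) ω)) : ℝ)) μ :=
        aux_int_inner (hmL2 s) (hξL2 s)
      have hptwise : ∀ ω, ‖ms (s+1) ω‖ ^ 2 =
          (1-η)^2 * ‖ms s ω‖ ^ 2 +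
          (2 * (1-η)) * (inner ℝ (ms s ω) (g (s+1) ω - gradient F (θtilde (s+1) ω)) : ℝ) +
          ‖g (s+1) ω - gradient F (θtilde (s+1) ω)‖ ^ 2 := by
        intro ω
        rw [hmsS s]
        rw [norm_add_sq_real]
        rw [norm_smul, Real.norm_eq_abs, abs_of_nonneg hη0, mul_pow,
          real_inner_smul_left]
        ring
      calc ∫ ω, ‖ms (s+1) ω‖ ^ 2 ∂μ
          = ∫ ω, ((1-η)^2 * ‖ms s ω‖ ^ 2 +
            (2 * (1-η)) * (inner ℝ (ms s ω) (g (s+1) ω - gradient F (θtilde (s+1) ω)) : ℝ) +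
            ‖g (s+1) ω - gradient F (θtilde (s+1) ω)‖ ^ 2) ∂μ := by
            exact integral_congr_ae (Filter.Eventually.of_forall hptwise)
        _ = (1-η)^2 * ∫ ω, ‖ms s ω‖ ^ 2 ∂μ +
            (2 * (1-η)) * ∫ ω, (inner ℝ (ms s ω)
              (g (s+1) ω - gradient F (θtilde (s+1) ω)) : ℝ) ∂μ +
            ∫ ω, ‖g (s+1) ω - gradient F (θtilde (s+1) ω)‖ ^ 2 ∂μ := by
            have e1 : ∫ ω, ((1-η)^2 * ‖ms s ω‖ ^ 2 +
                (2 * (1-η)) * (inner ℝ (ms s ω)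
                  (g (s+1) ω - gradient F (θtilde (s+1) ω)) : ℝ) +
                ‖g (s+1) ω - gradient F (θtilde (s+1) ω)‖ ^ 2) ∂μ
                = ∫ ω, ((1-η)^2 * ‖ms s ω‖ ^ 2 +
                (2 * (1-η)) * (inner ℝ (ms s ω)
                  (g (s+1) ω - gradient F (θtilde (s+1) ω)) : ℝ)) ∂μ +
                ∫ ω, ‖g (s+1) ω - gradient F (θtilde (s+1) ω)‖ ^ 2 ∂μ :=
              integral_add ((hmint.const_mul _).add (hinnerint.const_mul _)) hξint
            have e2 : ∫ ω, ((1-η)^2 * ‖ms s ω‖ ^ 2 +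
                (2 * (1-η)) * (inner ℝ (ms s ω)
                  (g (s+1) ω - gradient F (θtilde (s+1) ω)) : ℝ)) ∂μ
                = ∫ ω, (1-η)^2 * ‖ms s ω‖ ^ 2 ∂μ +
                  ∫ ω, (2 * (1-η)) * (inner ℝ (ms s ω)
                  (g (s+1) ω - gradient F (θtilde (s+1) ω)) : ℝ) ∂μ :=
              integral_add (hmint.const_mul _) (hinnerint.const_mul _)
            rw [e1, e2, integral_const_mul, integral_const_mul]
        _ ≤ (1-η)^2 * (σ ^ 2 / (M * η)) + 0 + σ ^ 2 / M := by
            rw [hcross s, mul_zero]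
            have h1 : (1-η)^2 * ∫ ω, ‖ms s ω‖ ^ 2 ∂μ ≤ (1-η)^2 * (σ ^ 2 / (M * η)) :=
              mul_le_mul_of_nonneg_left ih (by positivity)
            linarith [hξvar s]
        _ ≤ σ ^ 2 / (M * η) := by
            have hA : (0:ℝ) ≤ σ^2 / M := by positivity
            have h2 : σ^2/((M:ℝ) * η) = (σ^2/M)/η := by rw [div_div]
            rw [h2, add_zero]
            have h3 : (1-η)^2 * ((σ^2/(M:ℝ))/η) + σ^2/M = ((σ^2/M) * ((1-η)^2 + η))/η := by
              field_simp
            rw [h3]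
            gcongr
            have h6 : (1-η)^2 + η ≤ 1 := by nlinarith [hη2, hη1]
            calc σ^2/(M:ℝ) * ((1-η)^2+η) ≤ σ^2/M * 1 := mul_le_mul_of_nonneg_left h6 hA
              _ = σ^2/M := mul_one _
  -- deterministic drift bound
  have hZ : ∀ s : ℕ, ∀ ω, ‖(1-η) • gradient F (θ s ω) + η • gradient F (θtilde (s+1) ω)
      - gradient F (θ (s+1) ω)‖ ≤ c := by
    intro s ω
    set x := θ (s+1) ω with hx
    set ρ : ℝ := (1-η)/η with hρ
    have hρ0 : 0 ≤ ρ := by positivity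
    obtain ⟨u, hu_def⟩ : ∃ u : EuclideanSpace ℝ (Fin dim), u = θ s ω - x := ⟨_, rfl⟩
    obtain ⟨v, hv_def⟩ : ∃ v : EuclideanSpace ℝ (Fin dim), v = ρ • (x - θ s ω) := ⟨_, rfl⟩
    have hθs : θ s ω = x + u := by rw [hu_def]; abel
    have hθt : θtilde (s+1) ω = x + v := by
      have h := htilde (s+1) (by omega) ω
      simp only [Nat.add_sub_cancel] at h
      rw [h, hv_def]
    have hu : ‖u‖ ≤ α := by
      rw [hu_def, norm_sub_rev]; exact hstep s ω
    have hv : ‖v‖ ≤ ρ * α := by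
      rw [hv_def, norm_smul, Real.norm_eq_abs, abs_of_nonneg hρ0]
      exact mul_le_mul_of_nonneg_left (hstep s ω) hρ0
    have hv' : v = -(ρ • u) := by rw [hv_def, hu_def]; module
    have hlin : (1-η) • u + η • v = (0 : EuclideanSpace ℝ (Fin dim)) := by
      rw [hv', smul_neg, smul_smul, ← mul_div_assoc, mul_div_cancel_left₀ _ (ne_of_gt hη2)]
      abel
    set H := fderiv ℝ (gradient J) x with hH
    set A : EuclideanSpace ℝ (Fin dim) := gradient J (x+u) - gradient J x - H u with hA_def
    set B : EuclideanSpace ℝ (Fin dim) := gradient J (x+v) - gradient J x - H v with hB_def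
    have hA : ‖A‖ ≤ Lh * ‖u‖^2 := by
      have := htaylor x (x+u)
      simpa [hA_def] using this
    have hB : ‖B‖ ≤ Lh * ‖v‖^2 := by
      have := htaylor x (x+v)
      simpa [hB_def] using this
    have hJpart : ‖(1-η) • gradient J (θ s ω) + η • gradient J (θtilde (s+1) ω)
        - gradient J (θ (s+1) ω)‖ ≤ Lh * α^2 / η := by
      have hid : (1-η) • gradient J (θ s ω) + η • gradient J (θtilde (s+1) ω)
          - gradient J (θ (s+1) ω)
          = (1-η) • A + η • B + H ((1-η) • u + η • v) := by
        rw [hθs, hθt, ← hx, hA_def, hB_def, map_add, _root_.map_smul, _root_.map_smul]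
        module
      rw [hid, hlin, map_zero, add_zero]
      have h1 : ‖(1-η) • A + η • B‖ ≤ (1-η) * ‖A‖ + η * ‖B‖ := by
        calc ‖(1-η) • A + η • B‖ ≤ ‖(1-η) • A‖ + ‖η • B‖ := norm_add_le _ _
          _ = (1-η) * ‖A‖ + η * ‖B‖ := by
            rw [norm_smul, norm_smul, Real.norm_eq_abs, Real.norm_eq_abs,
              abs_of_nonneg hη0, abs_of_nonneg hη2.le]
      have hu2 : ‖u‖^2 ≤ α^2 := by
        have := pow_le_pow_left₀ (norm_nonneg u) hu 2
        simpa using this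
      have hv2 : ‖v‖^2 ≤ (ρ*α)^2 := by
        have := pow_le_pow_left₀ (norm_nonneg v) hv 2
        simpa using this
      have h2 : (1-η) * ‖A‖ + η * ‖B‖ ≤ (1-η) * (Lh * α^2) + η * (Lh * (ρ*α)^2) := by
        apply add_le_add
        · exact mul_le_mul_of_nonneg_left (hA.trans
            (mul_le_mul_of_nonneg_left hu2 hLh.le)) hη0
        · exact mul_le_mul_of_nonneg_left (hB.trans
            (mul_le_mul_of_nonneg_left hv2 hLh.le)) hη2.le
      have h3 : (1-η) * (Lh * α^2) + η * (Lh * (ρ*α)^2) = Lh * α^2 * ((1-η) + η * ρ^2) := by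
        ring
      have h4 : (1-η) + η * ρ^2 = (1-η)/η := by
        rw [hρ]; field_simp; ring
      have h5 : Lh * α^2 * ((1-η)/η) ≤ Lh * α^2 / η := by
        have h6 : (1-η)/η ≤ 1/η := by gcongr <;> linarith
        calc Lh * α^2 * ((1-η)/η) ≤ Lh * α^2 * (1/η) :=
              mul_le_mul_of_nonneg_left h6 (by positivity)
          _ = Lh * α^2 / η := by ring
      linarith [h1.trans (h2.trans_eq (h3.trans (by rw [h4])))]
    have hepart : ‖((1-η) • (gradient F (θ s ω) - gradient J (θ s ω))
        + η • (gradient F (θtilde (s+1) ω) - gradient J (θtilde (s+1) ω)))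
        - (gradient F (θ (s+1) ω) - gradient J (θ (s+1) ω))‖ ≤ 2 * δg := by
      calc ‖((1-η) • (gradient F (θ s ω) - gradient J (θ s ω))
          + η • (gradient F (θtilde (s+1) ω) - gradient J (θtilde (s+1) ω)))
          - (gradient F (θ (s+1) ω) - gradient J (θ (s+1) ω))‖
          ≤ ‖(1-η) • (gradient F (θ s ω) - gradient J (θ s ω))
          + η • (gradient F (θtilde (s+1) ω) - gradient J (θtilde (s+1) ω))‖
          + ‖gradient F (θ (s+1) ω) - gradient J (θ (s+1) ω)‖ := norm_sub_le _ _
        _ ≤ (‖(1-η) • (gradient F (θ s ω) - gradient J (θ s ω))‖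
          + ‖η • (gradient F (θtilde (s+1) ω) - gradient J (θtilde (s+1) ω))‖) + δg :=
            add_le_add (norm_add_le _ _) (hFg _)
        _ ≤ ((1-η) * δg + η * δg) + δg := by
            apply add_le_add_left
            apply add_le_add
            · rw [norm_smul, Real.norm_eq_abs, abs_of_nonneg hη0]
              exact mul_le_mul_of_nonneg_left (hFg _) hη0
            · rw [norm_smul, Real.norm_eq_abs, abs_of_nonneg hη2.le]
              exact mul_le_mul_of_nonneg_left (hFg _) hη2.le
        _ = 2 * δg := by ring
    have hsplit : (1-η) • gradient F (θ s ω) + η • gradient F (θtilde (s+1) ω)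
        - gradient F (θ (s+1) ω)
        = ((1-η) • gradient J (θ s ω) + η • gradient J (θtilde (s+1) ω)
          - gradient J (θ (s+1) ω))
        + (((1-η) • (gradient F (θ s ω) - gradient J (θ s ω))
          + η • (gradient F (θtilde (s+1) ω) - gradient J (θtilde (s+1) ω)))
          - (gradient F (θ (s+1) ω) - gradient J (θ (s+1) ω))) := by
      module
    rw [hsplit, hc_def]
    calc ‖_ + _‖ ≤ _ + _ := norm_add_le _ _
      _ ≤ Lh * α^2 / η + 2 * δg := add_le_add hJpart hepart
  -- the residual bound
  have hrb : ∀ t : ℕ, ∀ ω, ‖d t ω - gradient F (θ t ω) - η • ms t ω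
      - ((1-η)^t) • (d 0 ω - gradient F θ0)‖ ≤ c / η := by
    intro t
    induction t with
    | zero =>
      intro ω
      have : d 0 ω - gradient F (θ 0 ω) - η • ms 0 ω
          - ((1-η)^0) • (d 0 ω - gradient F θ0) = 0 := by
        rw [hθzero ω, hms0, pow_zero, one_smul, smul_zero]
        abel
      rw [this, norm_zero]
      positivity
    | succ s ih =>
      intro ω
      have hd' : d (s+1) ω = (1-η) • d s ω + η • g (s+1) ω := by
        have := hdrec (s+1) (by omega) ω
        simpa [Nat.add_sub_cancel] using this
      have hm' : ms (s+1) ω = (1-η) • ms s ω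
          + (g (s+1) ω - gradient F (θtilde (s+1) ω)) := by rw [hmsS s]
      have key : d (s+1) ω - gradient F (θ (s+1) ω) - η • ms (s+1) ω
          - ((1-η)^(s+1)) • (d 0 ω - gradient F θ0)
          = (1-η) • (d s ω - gradient F (θ s ω) - η • ms s ω
            - ((1-η)^s) • (d 0 ω - gradient F θ0))
          + ((1-η) • gradient F (θ s ω) + η • gradient F (θtilde (s+1) ω)
            - gradient F (θ (s+1) ω)) := by
        rw [hd', hm', pow_succ]
        module
      rw [key]
      calc ‖_ + _‖ ≤ ‖(1-η) • (d s ω - gradient F (θ s ω) - η • ms s ω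
            - ((1-η)^s) • (d 0 ω - gradient F θ0))‖
          + ‖(1-η) • gradient F (θ s ω) + η • gradient F (θtilde (s+1) ω)
            - gradient F (θ (s+1) ω)‖ := norm_add_le _ _
        _ ≤ (1-η) * (c/η) + c := by
            apply add_le_add _ (hZ s ω)
            rw [norm_smul, Real.norm_eq_abs, abs_of_nonneg hη0]
            exact mul_le_mul_of_nonneg_left (ih ω) hη0
        _ = c / η := by field_simp; ring
  -- integrated per-step bound
  have hεL2 : ∀ t, MemLp (fun ω => d t ω - gradient F (θ t ω)) 2 μ :=
    fun t => (hdL2 t).sub (hboundθ t)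
  have hε0L2 : MemLp (fun ω => d 0 ω - gradient F θ0) 2 μ := hd0L2.sub (memLp_const _)
  have hsqM : Real.sqrt M ≠ 0 := ne_of_gt (Real.sqrt_pos.mpr hMpos)
  have hsqη : Real.sqrt η ≠ 0 := ne_of_gt (Real.sqrt_pos.mpr hη2)
  have hmb : ∀ t, η * ∫ ω, ‖ms t ω‖ ∂μ ≤ Real.sqrt η * σ / Real.sqrt M := by
    intro t
    have h1 := aux_cs μ (hmL2 t)
    have h2 : Real.sqrt (∫ ω, ‖ms t ω‖^2 ∂μ) ≤ Real.sqrt (σ^2/((M:ℝ)*η)) :=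
      Real.sqrt_le_sqrt (hmvar t)
    have h3 : Real.sqrt (σ^2/((M:ℝ)*η)) = σ / (Real.sqrt M * Real.sqrt η) := by
      rw [Real.sqrt_div (sq_nonneg σ), Real.sqrt_sq hσ,
        Real.sqrt_mul (by positivity : (0:ℝ) ≤ (M:ℝ))]
    have h4 : η * (σ / (Real.sqrt M * Real.sqrt η)) = Real.sqrt η * σ / Real.sqrt M := by
      have hsq : Real.sqrt η * Real.sqrt η = η := Real.mul_self_sqrt hη2.le
      rw [mul_div_assoc']
      rw [div_eq_div_iff (mul_ne_zero hsqM hsqη) hsqM]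
      linear_combination (-(σ * Real.sqrt (M:ℝ))) * hsq
    calc η * ∫ ω, ‖ms t ω‖ ∂μ ≤ η * (σ / (Real.sqrt M * Real.sqrt η)) := by
          apply mul_le_mul_of_nonneg_left _ hη2.le
          rw [← h3]
          exact h1.trans h2
      _ = Real.sqrt η * σ / Real.sqrt M := h4
  have hε0b : ∫ ω, ‖d 0 ω - gradient F θ0‖ ∂μ ≤ σ / Real.sqrt Minit := by
    have h1 := aux_cs μ hε0L2
    have h2 : Real.sqrt (∫ ω, ‖d 0 ω - gradient F θ0‖^2 ∂μ) ≤ Real.sqrt (σ^2/(Minit:ℝ)) :=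
      Real.sqrt_le_sqrt hd0var
    have h3 : Real.sqrt (σ^2/(Minit:ℝ)) = σ / Real.sqrt Minit := by
      rw [Real.sqrt_div (sq_nonneg σ), Real.sqrt_sq hσ]
    exact h1.trans (h2.trans_eq h3)
  have hper : ∀ t : ℕ, ∫ ω, ‖d t ω - gradient F (θ t ω)‖ ∂μ ≤
      Real.sqrt η * σ / Real.sqrt M + (1-η)^t * (σ / Real.sqrt Minit) + c/η := by
    intro t
    have hpt : ∀ ω, ‖d t ω - gradient F (θ t ω)‖ ≤
        η * ‖ms t ω‖ + (1-η)^t * ‖d 0 ω - gradient F θ0‖ + c/η := by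
      intro ω
      have hdecomp : d t ω - gradient F (θ t ω) =
          (d t ω - gradient F (θ t ω) - η • ms t ω - ((1-η)^t) • (d 0 ω - gradient F θ0))
          + η • ms t ω + ((1-η)^t) • (d 0 ω - gradient F θ0) := by abel
      rw [hdecomp]
      calc ‖_ + _ + _‖ ≤ ‖_ + _‖ + ‖((1-η)^t) • (d 0 ω - gradient F θ0)‖ := norm_add_le _ _
        _ ≤ (‖d t ω - gradient F (θ t ω) - η • ms t ω
              - ((1-η)^t) • (d 0 ω - gradient F θ0)‖ + ‖η • ms t ω‖)
            + ‖((1-η)^t) • (d 0 ω - gradient F θ0)‖ :=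
            add_le_add_left (norm_add_le _ _) _
        _ ≤ (c/η + η * ‖ms t ω‖) + (1-η)^t * ‖d 0 ω - gradient F θ0‖ := by
            apply add_le_add
            · apply add_le_add (hrb t ω)
              rw [norm_smul, Real.norm_eq_abs, abs_of_nonneg hη2.le]
            · rw [norm_smul, Real.norm_eq_abs, abs_of_nonneg (pow_nonneg hη0 t)]
        _ = η * ‖ms t ω‖ + (1-η)^t * ‖d 0 ω - gradient F θ0‖ + c/η := by ring
    have hint1 : Integrable (fun ω => ‖d t ω - gradient F (θ t ω)‖) μ :=
      ((hεL2 t).integrable one_le_two).norm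
    have hintm : Integrable (fun ω => ‖ms t ω‖) μ :=
      ((hmL2 t).integrable one_le_two).norm
    have hint0 : Integrable (fun ω => ‖d 0 ω - gradient F θ0‖) μ :=
      (hε0L2.integrable one_le_two).norm
    have hint2 : Integrable (fun ω => η * ‖ms t ω‖
        + (1-η)^t * ‖d 0 ω - gradient F θ0‖ + c/η) μ :=
      ((hintm.const_mul η).add (hint0.const_mul _)).add (integrable_const _)
    calc ∫ ω, ‖d t ω - gradient F (θ t ω)‖ ∂μ
        ≤ ∫ ω, (η * ‖ms t ω‖ + (1-η)^t * ‖d 0 ω - gradient F θ0‖ + c/η) ∂μ :=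
          integral_mono hint1 hint2 hpt
      _ = η * ∫ ω, ‖ms t ω‖ ∂μ + (1-η)^t * ∫ ω, ‖d 0 ω - gradient F θ0‖ ∂μ + c/η := by
          have e1 : ∫ ω, (η * ‖ms t ω‖ + (1-η)^t * ‖d 0 ω - gradient F θ0‖ + c/η) ∂μ
              = ∫ ω, (η * ‖ms t ω‖ + (1-η)^t * ‖d 0 ω - gradient F θ0‖) ∂μ
                + ∫ _, c/η ∂μ :=
            integral_add ((hintm.const_mul η).add (hint0.const_mul _)) (integrable_const _)
          have e2 : ∫ ω, (η * ‖ms t ω‖ + (1-η)^t * ‖d 0 ω - gradient F θ0‖) ∂μ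
              = ∫ ω, η * ‖ms t ω‖ ∂μ + ∫ ω, (1-η)^t * ‖d 0 ω - gradient F θ0‖ ∂μ :=
            integral_add (hintm.const_mul η) (hint0.const_mul _)
          rw [e1, e2, integral_const_mul, integral_const_mul]
          simp
      _ ≤ Real.sqrt η * σ / Real.sqrt M + (1-η)^t * (σ / Real.sqrt Minit) + c/η := by
          apply add_le_add_left
          apply add_le_add (hmb t)
          exact mul_le_mul_of_nonneg_left hε0b (pow_nonneg hη0 t)
  -- summation
  intro T hT
  have hgeom : ∑ t ∈ Finset.range T, (1-η)^t ≤ 1/η := by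
    have hx : (1-η : ℝ) ≠ 1 := by
      intro h
      rw [sub_eq_self] at h
      exact (ne_of_gt hη2) h
    rw [geom_sum_eq hx]
    have he : ((1-η)^T - 1)/((1-η) - 1) = (1 - (1-η)^T)/η := by
      rw [show (1-η) - 1 = -η by ring, div_neg, ← neg_div]
      congr 1
      ring
    rw [he, div_le_div_iff_of_pos_right hη2]
    linarith [pow_nonneg hη0 T]
  calc ∑ t ∈ Finset.range T, ∫ ω, ‖d t ω - gradient F (θ t ω)‖ ∂μ
      ≤ ∑ t ∈ Finset.range T, (Real.sqrt η * σ / Real.sqrt M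
          + (1-η)^t * (σ / Real.sqrt Minit) + c/η) :=
        Finset.sum_le_sum (fun t _ => hper t)
    _ = T * (Real.sqrt η * σ / Real.sqrt M)
        + (σ / Real.sqrt Minit) * (∑ t ∈ Finset.range T, (1-η)^t) + T * (c/η) := by
        rw [Finset.sum_add_distrib, Finset.sum_add_distrib, Finset.sum_const,
          Finset.sum_const, Finset.card_range, ← Finset.sum_mul, nsmul_eq_mul, nsmul_eq_mul]
        ring
    _ ≤ T * (Real.sqrt η * σ / Real.sqrt M) + (σ / Real.sqrt Minit) * (1/η) + T * (c/η) := by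
        apply add_le_add_left
        apply add_le_add_right
        exact mul_le_mul_of_nonneg_left hgeom (by positivity)
    _ ≤ σ / (Real.sqrt Minit * η) + Real.sqrt η * σ * T / Real.sqrt M
        + 2 * α ^ 2 * Lh * T / η ^ 2 + 4 * δg * T / η + 2 * α * δh * T / η := by
        have e1 : (σ / Real.sqrt Minit) * (1/η) = σ / (Real.sqrt Minit * η) := by
          rw [div_mul_div_comm, mul_one]
        have e2 : (T:ℝ) * (Real.sqrt η * σ / Real.sqrt M)
            = Real.sqrt η * σ * T / Real.sqrt M := by ring
        have e3 : (T:ℝ) * (c/η) = Lh * α^2 * T/η^2 + 2*δg*T/η := by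
          rw [hc_def]; field_simp
        have p1 : (0:ℝ) ≤ α^2 * Lh * T / η^2 := by positivity
        have p2 : (0:ℝ) ≤ 2 * δg * T / η := by positivity
        have p3 : (0:ℝ) ≤ 2 * α * δh * T / η := by positivity
        have e4 : 2 * α ^ 2 * Lh * (T:ℝ) / η ^ 2
            = Lh * α^2 * T/η^2 + α^2 * Lh * T / η^2 := by ring
        have e5 : 4 * δg * (T:ℝ) / η = 2*δg*T/η + 2 * δg * T / η := by ring
        linarith [e1, e2, e3]
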